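/- Let β1, β2 > 0, set p1 = ⌊β1⌋, p2 = ⌊β2⌋, and let M be a natural number with M ≥ max(β1, β2). Let K : ℝ → ℝ be a bounded measurable function supported in [−1, 1] with ∫ℝ K(x) dx = 1 and ∫ℝ K(x) x^i dx = 0 for every integer i with 1 ≤ i ≤ M. Let π : ℝ² → ℝ belong to the anisotropic Hölder class H((β1, β2), (L1, L2)). Then there exists a constant C > 0, depending only on K, β1, β2, L1, L2, such that for all (x*, y*) ∈ ℝ² and all h1, h2 ∈ (0, 1], one has |∫ℝ ∫ℝ K(u) K(v) (π(x* − h1·u, y* − h2·v) − π(x*, y*)) du dv| ≤ C (h1^{β1} + h2^{β2}). -/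

import Mathlib

open MeasureTheory Set

private lemma iDW_eq {n m : ℕ} (hmn : m ≤ n) {f : ℝ → ℝ} (hf : ContDiff ℝ (n : ℕ∞) f)
    {s : Set ℝ} (hs : UniqueDiffOn ℝ s) {x : ℝ} (hx : x ∈ s) :
    iteratedDerivWithin m f s x = iteratedDeriv m f x := by
  have h := contDiff_iff_ftaylorSeries.mp hf
  have h2 := (hasFTaylorSeriesUpToOn_univ_iff.mpr h).mono (subset_univ s)
  have h3 := h2.eq_iteratedFDerivWithin_of_uniqueDiffOn (m := m) (by exact_mod_cast hmn) hs hx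
  rw [iteratedDerivWithin_eq_iteratedFDerivWithin, iteratedDeriv_eq_iteratedFDeriv, ← h3]
  rfl

private lemma taylor_holder_lt {p : ℕ} {β L : ℝ} (hpβ : (p : ℝ) ≤ β) (hβ : 0 < β) (hL : 0 ≤ L)
    {g : ℝ → ℝ} (hg : ContDiff ℝ (p : ℕ∞) g)
    (hH : ∀ s t : ℝ, |iteratedDeriv p g s - iteratedDeriv p g t| ≤ L * |s - t| ^ (β - (p : ℝ)))
    {a t : ℝ} (hat : a < t) :
    |g t - ∑ i ∈ Finset.range (p + 1),
        iteratedDeriv i g a * (t - a) ^ i / (Nat.factorial i : ℝ)| ≤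
      L / (Nat.factorial p : ℝ) * |t - a| ^ β := by
  have ht0 : (0:ℝ) < t - a := sub_pos.2 hat
  have habs : |t - a| = t - a := abs_of_pos ht0
  cases p with
  | zero =>
    have h := hH t a
    simp only [iteratedDeriv_zero, Nat.cast_zero, sub_zero] at h
    simpa [Finset.sum_range_succ] using h
  | succ n =>
    have hIcc := uniqueDiffOn_Icc hat
    have haIcc : a ∈ Icc a t := left_mem_Icc.2 hat.le
    have hconOn : ContDiffOn ℝ (n : ℕ∞) g (Icc a t) :=
      (hg.of_le (by exact_mod_cast Nat.le_succ n)).contDiffOn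
    have hD : Differentiable ℝ (iteratedDeriv n g) :=
      hg.differentiable_iteratedDeriv n (by exact_mod_cast Nat.lt_succ_self n)
    have hdiff : DifferentiableOn ℝ (iteratedDerivWithin n g (Icc a t)) (Ioo a t) := by
      refine (hD.differentiableOn).congr fun z hz => ?_
      exact iDW_eq (Nat.le_succ n) hg hIcc (Ioo_subset_Icc_self hz)
    obtain ⟨x', hx', hxeq⟩ := taylor_mean_remainder_lagrange hat.ne
      (by rw [uIcc_of_le hat.le]; exact hconOn) (by rw [uIcc_of_le hat.le, uIoo_of_lt hat]; exact hdiff)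
    rw [uIoo_of_lt hat] at hx'
    rw [uIcc_of_le hat.le] at hxeq
    have htay : taylorWithinEval g n (Icc a t) a t
        = ∑ k ∈ Finset.range (n + 1), iteratedDeriv k g a * (t - a) ^ k / (Nat.factorial k : ℝ) := by
      rw [taylor_within_apply]
      refine Finset.sum_congr rfl fun k hk => ?_
      rw [iDW_eq (le_of_lt (Finset.mem_range.mp hk)) hg hIcc haIcc]
      simp [smul_eq_mul]
      ring
    rw [iDW_eq (le_refl (n+1)) hg hIcc (Ioo_subset_Icc_self hx')] at hxeq
    have key : g t - ∑ i ∈ Finset.range (n + 2),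
        iteratedDeriv i g a * (t - a) ^ i / (Nat.factorial i : ℝ)
        = (iteratedDeriv (n+1) g x' - iteratedDeriv (n+1) g a) * (t - a) ^ (n+1)
            / (Nat.factorial (n+1) : ℝ) := by
      have h2 : g t - ∑ k ∈ Finset.range (n + 1),
          iteratedDeriv k g a * (t - a) ^ k / (Nat.factorial k : ℝ)
          = iteratedDeriv (n+1) g x' * (t - a) ^ (n+1) / (Nat.factorial (n+1) : ℝ) := by
        rw [← htay]; exact hxeq
      have h3 := Finset.sum_range_succ
        (fun i => iteratedDeriv i g a * (t - a) ^ i / (Nat.factorial i : ℝ)) (n+1)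
      rw [h3, sub_mul, sub_div]
      linarith [h2]
    rw [key]
    have hfacpos : (0:ℝ) < (Nat.factorial (n+1) : ℝ) := by positivity
    have habs2 : |(iteratedDeriv (n+1) g x' - iteratedDeriv (n+1) g a) * (t - a) ^ (n+1)
        / (Nat.factorial (n+1) : ℝ)|
        = |iteratedDeriv (n+1) g x' - iteratedDeriv (n+1) g a| * (t - a) ^ (n+1)
            / (Nat.factorial (n+1) : ℝ) := by
      rw [abs_div, abs_mul, abs_of_pos (pow_pos ht0 _), abs_of_pos hfacpos]
    rw [habs2, habs]
    have hexp : (0:ℝ) ≤ β - ((n:ℝ)+1) := by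
      have : ((n:ℝ)+1) ≤ β := by exact_mod_cast hpβ
      linarith
    have hx'b : |iteratedDeriv (n+1) g x' - iteratedDeriv (n+1) g a|
        ≤ L * (t - a) ^ (β - ((n+1:ℕ) : ℝ)) := by
      refine (hH x' a).trans ?_
      have h1 : |x' - a| ≤ t - a := by
        rw [abs_of_pos (sub_pos.2 hx'.1)]; linarith [hx'.2.le]
      have h2 := Real.rpow_le_rpow (abs_nonneg _) h1 (by push_cast; exact hexp)
      refine mul_le_mul_of_nonneg_left ?_ hL
      convert h2 using 2 <;> push_cast <;> rfl
    calc |iteratedDeriv (n+1) g x' - iteratedDeriv (n+1) g a| * (t - a) ^ (n+1)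
            / (Nat.factorial (n+1) : ℝ)
        ≤ (L * (t - a) ^ (β - ((n+1:ℕ) : ℝ))) * (t - a) ^ (n+1) / (Nat.factorial (n+1) : ℝ) := by
          refine div_le_div_of_nonneg_right ?_ hfacpos.le |>.trans_eq rfl
          exact mul_le_mul_of_nonneg_right hx'b (pow_nonneg ht0.le _)
      _ = L / (Nat.factorial (n+1) : ℝ) * (t - a) ^ β := by
          rw [mul_div_assoc, ← Real.rpow_natCast (t - a) (n+1)]
          have hXX : (t - a) ^ (β - (((n+1):ℕ):ℝ)) * (t - a) ^ ((((n+1):ℕ)):ℝ) = (t - a) ^ β := by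
            rw [← Real.rpow_add ht0]; congr 1; push_cast; ring
          calc L * (t - a) ^ (β - (((n+1):ℕ):ℝ))
                * ((t - a) ^ ((((n+1):ℕ)):ℝ) / (Nat.factorial (n+1) : ℝ))
              = L * ((t - a) ^ (β - (((n+1):ℕ):ℝ)) * (t - a) ^ ((((n+1):ℕ)):ℝ))
                  / (Nat.factorial (n+1) : ℝ) := by ring
            _ = L / (Nat.factorial (n+1) : ℝ) * (t - a) ^ β := by rw [hXX]; ring

private lemma taylor_holder {p : ℕ} {β L : ℝ} (hpβ : (p : ℝ) ≤ β) (hβ : 0 < β) (hL : 0 ≤ L)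
    {g : ℝ → ℝ} (hg : ContDiff ℝ (p : ℕ∞) g)
    (hH : ∀ s t : ℝ, |iteratedDeriv p g s - iteratedDeriv p g t| ≤ L * |s - t| ^ (β - (p : ℝ)))
    (a t : ℝ) :
    |g t - ∑ i ∈ Finset.range (p + 1),
        iteratedDeriv i g a * (t - a) ^ i / (Nat.factorial i : ℝ)| ≤
      L / (Nat.factorial p : ℝ) * |t - a| ^ β := by
  rcases lt_trichotomy a t with h | h | h
  · exact taylor_holder_lt hpβ hβ hL hg hH h
  · subst h
    have hs : ∑ i ∈ Finset.range (p + 1),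
        iteratedDeriv i g a * (a - a) ^ i / (Nat.factorial i : ℝ) = g a := by
      rw [Finset.sum_eq_single 0]
      · simp
      · intro b _ hb; simp [zero_pow hb, sub_self]
      · intro hh; exact absurd (Finset.mem_range.mpr (Nat.succ_pos p)) hh
    rw [hs, sub_self, abs_zero, sub_self, abs_zero, Real.zero_rpow hβ.ne', mul_zero]
  · -- t < a : reflection
    have hgneg : ContDiff ℝ (p : ℕ∞) (fun s => g (-s)) := hg.comp (contDiff_id.neg)
    have hHneg : ∀ s t : ℝ, |iteratedDeriv p (fun s => g (-s)) s
        - iteratedDeriv p (fun s => g (-s)) t| ≤ L * |s - t| ^ (β - (p : ℝ)) := by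
      intro s t
      rw [iteratedDeriv_comp_neg, iteratedDeriv_comp_neg]
      have e : (-1:ℝ)^p • iteratedDeriv p g (-s) - (-1:ℝ)^p • iteratedDeriv p g (-t)
          = (-1:ℝ)^p * (iteratedDeriv p g (-s) - iteratedDeriv p g (-t)) := by
        simp [smul_eq_mul]; ring
      rw [e, abs_mul, abs_pow, abs_neg, abs_one, one_pow, one_mul]
      have h2 := hH (-s) (-t)
      have e2 : |(-s) - (-t)| = |s - t| := by
        rw [show (-s) - (-t) = -(s - t) by ring, abs_neg]
      rwa [e2] at h2
    have h' := taylor_holder_lt hpβ hβ hL hgneg hHneg (a := -a) (t := -t) (by linarith)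
    simp only [neg_neg] at h'
    have hsum : ∑ i ∈ Finset.range (p + 1),
        iteratedDeriv i (fun s => g (-s)) (-a) * (-t - -a) ^ i / (Nat.factorial i : ℝ)
        = ∑ i ∈ Finset.range (p + 1),
          iteratedDeriv i g a * (t - a) ^ i / (Nat.factorial i : ℝ) := by
      refine Finset.sum_congr rfl fun i _ => ?_
      rw [iteratedDeriv_comp_neg]
      simp only [neg_neg, smul_eq_mul]
      have e3 : ((-1:ℝ))^i * (-t - -a)^i = (t - a)^i := by
        rw [← mul_pow]; ring_nf
      calc (-1:ℝ)^i * iteratedDeriv i g a * (-t - -a)^i / (Nat.factorial i : ℝ)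
          = iteratedDeriv i g a * ((-1:ℝ)^i * (-t - -a)^i) / (Nat.factorial i : ℝ) := by ring
        _ = iteratedDeriv i g a * (t - a)^i / (Nat.factorial i : ℝ) := by rw [e3]
    rw [hsum] at h'
    have e4 : |(-t) - (-a)| = |t - a| := by
      rw [show (-t) - (-a) = -(t - a) by ring, abs_neg]
    rwa [e4] at h'

private lemma meas_slice {p : ℕ} {f : ℝ → ℝ → ℝ}
    (hf1 : ∀ b, ContDiff ℝ (p : ℕ∞) (fun t => f t b))
    (hf2 : ∀ t, Continuous (fun b => f t b)) :
    ∀ i, i ≤ p → ∀ t, Measurable fun b => iteratedDeriv i (fun s => f s b) t := by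
  intro i
  induction i with
  | zero =>
    intro _ t
    simpa [iteratedDeriv_zero] using (hf2 t).measurable
  | succ n ih =>
    intro hnp t
    have hn : n ≤ p := Nat.le_of_succ_le hnp
    have happrox : ∀ m : ℕ, Measurable fun b =>
        (iteratedDeriv n (fun s => f s b) (t + 1/((m:ℝ)+1))
          - iteratedDeriv n (fun s => f s b) t) / (t + 1/((m:ℝ)+1) - t) :=
      fun m => (((ih hn (t + 1/((m:ℝ)+1))).sub (ih hn t)).div_const _)
    refine measurable_of_tendsto_metrizable happrox ?_
    rw [tendsto_pi_nhds]
    intro b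
    have hdiff : DifferentiableAt ℝ (iteratedDeriv n (fun s => f s b)) t :=
      ((hf1 b).differentiable_iteratedDeriv n (by exact_mod_cast hnp)).differentiableAt
    have hder : HasDerivAt (iteratedDeriv n (fun s => f s b))
        (iteratedDeriv (n+1) (fun s => f s b) t) t := by
      rw [iteratedDeriv_succ]
      exact hdiff.hasDerivAt
    have hslope := hasDerivAt_iff_tendsto_slope.mp hder
    have hseq : Filter.Tendsto (fun m : ℕ => t + 1/((m:ℝ)+1)) Filter.atTop (nhdsWithin t {t}ᶜ) := by
      rw [tendsto_nhdsWithin_iff]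
      constructor
      · have h0 := tendsto_one_div_add_atTop_nhds_zero_nat (𝕜 := ℝ)
        have := (tendsto_const_nhds (x := t) (f := Filter.atTop (α := ℕ))).add h0
        simpa using this
      · refine Filter.Eventually.of_forall fun m => ?_
        simp only [Set.mem_compl_iff, Set.mem_singleton_iff]
        have hpos : (0:ℝ) < 1/((m:ℝ)+1) := by positivity
        intro hc
        nlinarith [hc]
    have hcomp := hslope.comp hseq
    have heq : (fun m : ℕ =>
        (iteratedDeriv n (fun s => f s b) (t + 1/((m:ℝ)+1))
          - iteratedDeriv n (fun s => f s b) t) / (t + 1/((m:ℝ)+1) - t))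
        = (slope (iteratedDeriv n (fun s => f s b)) t) ∘ (fun m : ℕ => t + 1/((m:ℝ)+1)) := by
      funext m
      simp [Function.comp, slope_def_field]
    rw [heq]
    exact hcomp

private lemma coeff_bound (p : ℕ) {β L : ℝ} (hpβ : (p : ℝ) ≤ β) (hβ : 0 < β) (hL : 0 ≤ L) :
    ∃ W : ℝ, 0 ≤ W ∧ ∀ g : ℝ → ℝ, ContDiff ℝ (p : ℕ∞) g →
      (∀ s t : ℝ, |iteratedDeriv p g s - iteratedDeriv p g t| ≤ L * |s - t| ^ (β - (p:ℝ))) →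
      ∀ x : ℝ, ∀ i, i ≤ p →
        |iteratedDeriv i g x| ≤ W * (∑ k ∈ Finset.range (p + 1), |g (x + k)| + 1) := by
  classical
  set v : Fin (p+1) → ℝ := fun k => (k : ℝ) with hv
  set A := Matrix.vandermonde v with hA
  have hdet : A.det ≠ 0 := by
    rw [hA, Matrix.det_vandermonde]
    refine Finset.prod_ne_zero_iff.mpr fun i _ => Finset.prod_ne_zero_iff.mpr fun j hj => ?_
    have hij : i < j := Finset.mem_Ioi.mp hj
    have : (i:ℝ) < (j:ℝ) := by exact_mod_cast hij
    rw [hv]; exact sub_ne_zero.2 this.ne'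
  set Z := ∑ i : Fin (p+1), ∑ j : Fin (p+1), |A⁻¹ i j| with hZ
  have hZnn : 0 ≤ Z := Finset.sum_nonneg fun _ _ => Finset.sum_nonneg fun _ _ => abs_nonneg _
  have hZentry : ∀ i j : Fin (p+1), |A⁻¹ i j| ≤ Z := by
    intro i j
    calc |A⁻¹ i j| ≤ ∑ j' : Fin (p+1), |A⁻¹ i j'| :=
          Finset.single_le_sum (f := fun j' => |A⁻¹ i j'|)
            (fun _ _ => abs_nonneg _) (Finset.mem_univ j)
      _ ≤ Z := Finset.single_le_sum (f := fun i' => ∑ j' : Fin (p+1), |A⁻¹ i' j'|)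
          (fun _ _ => Finset.sum_nonneg fun _ _ => abs_nonneg _) (Finset.mem_univ i)
  set C0 := L / (Nat.factorial p : ℝ) * (p:ℝ) ^ β with hC0def
  have hC0 : 0 ≤ C0 := by
    apply mul_nonneg (div_nonneg hL (by positivity))
    exact Real.rpow_nonneg (Nat.cast_nonneg p) β
  have hfacpos : (0:ℝ) < (Nat.factorial p : ℝ) := by positivity
  refine ⟨(Nat.factorial p : ℝ) * Z * (1 + (p+1) * C0),
    by positivity, ?_⟩
  intro g hg hH x i hip
  set c : Fin (p+1) → ℝ := fun i => iteratedDeriv i g x / (Nat.factorial i : ℝ) with hc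
  have hev : ∀ k : Fin (p+1), |(A.mulVec c) k| ≤ |g (x + (k:ℕ))| + C0 := by
    intro k
    have hAc : (A.mulVec c) k = ∑ j ∈ Finset.range (p+1),
        iteratedDeriv j g x * ((x + (k:ℕ)) - x) ^ j / (Nat.factorial j : ℝ) := by
      rw [← Fin.sum_univ_eq_sum_range
        (fun j => iteratedDeriv j g x * ((x + (k:ℕ)) - x) ^ j / (Nat.factorial j : ℝ)) (p+1)]
      simp only [Matrix.mulVec, dotProduct, hA, Matrix.vandermonde_apply, hv, hc]
      refine Finset.sum_congr rfl fun j _ => ?_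
      have : (x + (k:ℕ)) - x = ((k:ℕ):ℝ) := by ring
      rw [this]
      ring
    have ht := taylor_holder hpβ hβ hL hg hH x (x + (k:ℕ))
    have hkp : ((k:ℕ):ℝ) ≤ (p:ℝ) := by
      have := Nat.lt_succ_iff.mp k.isLt
      exact_mod_cast this
    have habs : |(x + (k:ℕ)) - x| = ((k:ℕ):ℝ) := by
      rw [show (x + (k:ℕ)) - x = ((k:ℕ):ℝ) by ring]
      exact abs_of_nonneg (Nat.cast_nonneg _)
    have hrpow : |(x + (k:ℕ)) - x| ^ β ≤ (p:ℝ) ^ β := by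
      rw [habs]
      exact Real.rpow_le_rpow (Nat.cast_nonneg _) hkp hβ.le
    have ht2 : |g (x + (k:ℕ)) - (A.mulVec c) k| ≤ C0 := by
      rw [hAc, hC0def]
      refine ht.trans ?_
      exact mul_le_mul_of_nonneg_left hrpow (div_nonneg hL hfacpos.le)
    calc |(A.mulVec c) k| = |g (x + (k:ℕ)) - (g (x + (k:ℕ)) - (A.mulVec c) k)| := by ring_nf
      _ ≤ |g (x + (k:ℕ))| + |g (x + (k:ℕ)) - (A.mulVec c) k| := abs_sub _ _
      _ ≤ |g (x + (k:ℕ))| + C0 := by linarith [ht2]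
  have hcinv : c = A⁻¹.mulVec (A.mulVec c) := by
    rw [Matrix.mulVec_mulVec, Matrix.nonsing_inv_mul A (isUnit_iff_ne_zero.2 hdet),
      Matrix.one_mulVec]
  set i' : Fin (p+1) := ⟨i, Nat.lt_succ_of_le hip⟩ with hi'
  have hci : |c i'| ≤ Z * (∑ k ∈ Finset.range (p+1), |g (x + k)| + (p+1) * C0) := by
    have h1 : c i' = ∑ j : Fin (p+1), A⁻¹ i' j * (A.mulVec c) j := by
      conv_lhs => rw [hcinv]
      simp [Matrix.mulVec, dotProduct]
    rw [h1]
    calc |∑ j : Fin (p+1), A⁻¹ i' j * (A.mulVec c) j|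
        ≤ ∑ j : Fin (p+1), |A⁻¹ i' j * (A.mulVec c) j| :=
          Finset.abs_sum_le_sum_abs _ _
      _ ≤ ∑ j : Fin (p+1), Z * (|g (x + (j:ℕ))| + C0) := by
          refine Finset.sum_le_sum fun j _ => ?_
          rw [abs_mul]
          exact mul_le_mul (hZentry i' j) (hev j) (abs_nonneg _)
            hZnn
      _ = Z * (∑ j : Fin (p+1), (|g (x + (j:ℕ))| + C0)) := by rw [Finset.mul_sum]
      _ = Z * (∑ k ∈ Finset.range (p+1), |g (x + k)| + (p+1) * C0) := by
          congr 1
          rw [Finset.sum_add_distrib, Finset.sum_const, Finset.card_univ, Fintype.card_fin,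
            nsmul_eq_mul]
          rw [← Fin.sum_univ_eq_sum_range (fun k => |g (x + k)|) (p+1)]
          push_cast
          ring
  have hiD : iteratedDeriv i g x = c i' * (Nat.factorial i : ℝ) := by
    rw [hc]
    field_simp
    rfl
  rw [hiD, abs_mul, abs_of_pos (by positivity : (0:ℝ) < (Nat.factorial i : ℝ))]
  have hfacle : (Nat.factorial i : ℝ) ≤ (Nat.factorial p : ℝ) := by
    exact_mod_cast Nat.factorial_le hip
  have hSnn : 0 ≤ ∑ k ∈ Finset.range (p+1), |g (x + k)| :=
    Finset.sum_nonneg fun _ _ => abs_nonneg _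
  calc |c i'| * (Nat.factorial i : ℝ)
      ≤ (Z * (∑ k ∈ Finset.range (p+1), |g (x + k)| + (p+1) * C0)) * (Nat.factorial p : ℝ) := by
        refine mul_le_mul hci hfacle (by positivity) ?_
        exact mul_nonneg hZnn (by positivity)
    _ ≤ (Nat.factorial p : ℝ) * Z * (1 + (p+1) * C0)
        * (∑ k ∈ Finset.range (p+1), |g (x + k)| + 1) := by
        have h1 : (0:ℝ) ≤ (Nat.factorial p : ℝ) * Z := mul_nonneg hfacpos.le hZnn
        have h2 : (0:ℝ) ≤ ((p:ℝ)+1) * C0 := mul_nonneg (by positivity) hC0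
        have h3 : (0:ℝ) ≤ (Nat.factorial p : ℝ) * Z * (((p:ℝ)+1) * C0)
            * (∑ k ∈ Finset.range (p+1), |g (x + k)|) :=
          mul_nonneg (mul_nonneg h1 h2) hSnn
        nlinarith [h1, h2, h3, hSnn]
section MainProof

open Filter

set_option maxHeartbeats 1000000 in
/-- Bias bound for the anisotropic Hölder class: the kernel smoothing error is
bounded by `C * (h1 ^ β1 + h2 ^ β2)` uniformly over the Hölder class. -/
theorem bias_bound_anisotropic_holder
    (β1 β2 L1 L2 : ℝ) (hβ1 : 0 < β1) (hβ2 : 0 < β2)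
    (hL1 : 0 < L1) (hL2 : 0 < L2)
    (M : ℕ) (hM : max β1 β2 ≤ (M : ℝ))
    (K : ℝ → ℝ) (hKmeas : Measurable K) (hKbdd : ∃ B : ℝ, ∀ x, |K x| ≤ B)
    (hKsupp : ∀ x : ℝ, x ∉ Set.Icc (-1 : ℝ) 1 → K x = 0)
    (hKint : (∫ x : ℝ, K x) = 1)
    (hKmom : ∀ i : ℕ, 1 ≤ i → i ≤ M → (∫ x : ℝ, K x * x ^ i) = 0) :
    ∃ C : ℝ, 0 < C ∧ ∀ f : ℝ → ℝ → ℝ,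
      (∀ x2 : ℝ, ContDiff ℝ (⌊β1⌋₊ : ℕ) (fun t => f t x2)) →
      (∀ x1 : ℝ, ContDiff ℝ (⌊β2⌋₊ : ℕ) (fun t => f x1 t)) →
      (∀ x1 x1' x2 : ℝ,
        |iteratedDeriv ⌊β1⌋₊ (fun t => f t x2) x1 -
            iteratedDeriv ⌊β1⌋₊ (fun t => f t x2) x1'| ≤
          L1 * |x1 - x1'| ^ (β1 - (⌊β1⌋₊ : ℝ))) →
      (∀ x1 x2 x2' : ℝ,
        |iteratedDeriv ⌊β2⌋₊ (fun t => f x1 t) x2 -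
            iteratedDeriv ⌊β2⌋₊ (fun t => f x1 t) x2'| ≤
          L2 * |x2 - x2'| ^ (β2 - (⌊β2⌋₊ : ℝ))) →
      ∀ x y h1 h2 : ℝ, 0 < h1 → h1 ≤ 1 → 0 < h2 → h2 ≤ 1 →
        |∫ u : ℝ, ∫ v : ℝ, K u * K v * (f (x - h1 * u) (y - h2 * v) - f x y)| ≤
          C * (h1 ^ β1 + h2 ^ β2) := by
  classical
  obtain ⟨B, hB⟩ := hKbdd
  have hB0 : 0 ≤ B := (abs_nonneg _).trans (hB 0)
  have hβ1M : β1 ≤ M := le_trans (le_max_left _ _) hM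
  have hβ2M : β2 ≤ M := le_trans (le_max_right _ _) hM
  have hp1β : ((⌊β1⌋₊ : ℕ) : ℝ) ≤ β1 := Nat.floor_le hβ1.le
  have hp2β : ((⌊β2⌋₊ : ℕ) : ℝ) ≤ β2 := Nat.floor_le hβ2.le
  have hp1M : ⌊β1⌋₊ ≤ M := by exact_mod_cast le_trans hp1β hβ1M
  have hp2M : ⌊β2⌋₊ ≤ M := by exact_mod_cast le_trans hp2β hβ2M
  obtain ⟨W1, hW1nn, hW1⟩ := coeff_bound ⌊β1⌋₊ hp1β hβ1 hL1.le
  set p1 : ℕ := ⌊β1⌋₊ with hp1def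
  set p2 : ℕ := ⌊β2⌋₊ with hp2def
  set a1 : ℝ := L1 / (Nat.factorial p1 : ℝ) with ha1def
  set a2 : ℝ := L2 / (Nat.factorial p2 : ℝ) with ha2def
  have ha1nn : 0 ≤ a1 := div_nonneg hL1.le (by positivity)
  have ha2nn : 0 ≤ a2 := div_nonneg hL2.le (by positivity)
  refine ⟨(2*B+1)^2 * (a1 + a2) + 1, by positivity, ?_⟩
  intro f hf1 hf2 hH1 hH2 x y h1 h2 h1pos h1le h2pos h2le
  -- ## basic integrability helpers
  have hIndInt : ∀ D : ℝ, Integrable ((Set.Icc (-1:ℝ) 1).indicator fun _ => D) := by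
    intro D
    rw [integrable_indicator_iff measurableSet_Icc]
    exact integrableOn_const measure_Icc_lt_top.ne
  have hIntAux : ∀ (φ : ℝ → ℝ) (D : ℝ), AEStronglyMeasurable φ volume →
      (∀ w, w ∉ Set.Icc (-1:ℝ) 1 → φ w = 0) → (∀ w ∈ Set.Icc (-1:ℝ) 1, |φ w| ≤ D) →
      Integrable φ := by
    intro φ D hm hz hd
    refine Integrable.mono' (hIndInt D) hm (Filter.Eventually.of_forall fun w => ?_)
    by_cases hw : w ∈ Set.Icc (-1:ℝ) 1
    · simpa [Set.indicator_of_mem hw, Real.norm_eq_abs] using hd w hw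
    · simp [Set.indicator_of_notMem hw, hz w hw, Real.norm_eq_abs]
  have hIntBnd : ∀ (φ : ℝ → ℝ) (D : ℝ), AEStronglyMeasurable φ volume →
      (∀ w, w ∉ Set.Icc (-1:ℝ) 1 → φ w = 0) → (∀ w ∈ Set.Icc (-1:ℝ) 1, |φ w| ≤ D) →
      |∫ w, φ w| ≤ 2 * D := by
    intro φ D hm hz hd
    have hle : |∫ w, φ w| ≤ ∫ w, ((Set.Icc (-1:ℝ) 1).indicator fun _ => D) w := by
      rw [← Real.norm_eq_abs]
      refine norm_integral_le_of_norm_le (hIndInt D) (Filter.Eventually.of_forall fun w => ?_)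
      by_cases hw : w ∈ Set.Icc (-1:ℝ) 1
      · simpa [Set.indicator_of_mem hw, Real.norm_eq_abs] using hd w hw
      · simp [Set.indicator_of_notMem hw, hz w hw, Real.norm_eq_abs]
    refine hle.trans ?_
    rw [integral_indicator_const _ measurableSet_Icc]
    rw [measureReal_def, Real.volume_Icc]
    rw [smul_eq_mul]
    rw [show (1:ℝ) - (-1) = 2 by norm_num, ENNReal.toReal_ofReal (by norm_num : (0:ℝ) ≤ 2)]
  have hKint' : Integrable K :=
    hIntAux K B hKmeas.aestronglyMeasurable hKsupp (fun w _ => hB w)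
  have hIntKb : ∀ (ψ : ℝ → ℝ) (D : ℝ), AEStronglyMeasurable ψ volume →
      (∀ w ∈ Set.Icc (-1:ℝ) 1, |ψ w| ≤ D) → Integrable fun w => K w * ψ w := by
    intro ψ D hm hd
    refine hIntAux _ (B * D) (hKmeas.aestronglyMeasurable.mul hm)
      (fun w hw => by simp [hKsupp w hw]) fun w hw => ?_
    rw [abs_mul]
    exact mul_le_mul (hB w) (hd w hw) (abs_nonneg _) hB0
  have hIntKcont : ∀ ψ : ℝ → ℝ, Continuous ψ → Integrable fun w => K w * ψ w := by
    intro ψ hψ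
    obtain ⟨D, hD⟩ := isCompact_Icc.exists_bound_of_continuousOn
      (s := Set.Icc (-1:ℝ) 1) hψ.continuousOn
    exact hIntKb ψ D hψ.measurable.aestronglyMeasurable
      fun w hw => by simpa [Real.norm_eq_abs] using hD w hw
  have hKBnd : ∀ (ψ : ℝ → ℝ) (D : ℝ), AEStronglyMeasurable ψ volume →
      (∀ w ∈ Set.Icc (-1:ℝ) 1, |ψ w| ≤ D) → |∫ w, K w * ψ w| ≤ 2 * (B * D) := by
    intro ψ D hm hd
    refine hIntBnd _ (B * D) (hKmeas.aestronglyMeasurable.mul hm)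
      (fun w hw => by simp [hKsupp w hw]) fun w hw => ?_
    rw [abs_mul]
    exact mul_le_mul (hB w) (hd w hw) (abs_nonneg _) hB0
  -- ## continuity facts
  have hfc1 : ∀ s : ℝ, Continuous fun t => f t s := fun s => (hf1 s).continuous
  have hfc2 : ∀ t : ℝ, Continuous fun s => f t s := fun t => (hf2 t).continuous
  -- ## derivative coefficients
  set c : ℕ → ℝ → ℝ := fun i s => iteratedDeriv i (fun t => f t s) x with hcdef
  have hcmeas : ∀ i, i ≤ p1 → Measurable fun s => c i s := by
    intro i hi
    exact meas_slice hf1 hfc2 i hi x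
  have hc0 : ∀ s, c 0 s = f x s := by intro s; simp [hcdef]
  set d : ℕ → ℝ := fun j => iteratedDeriv j (fun s => f x s) y with hddef
  have hd0 : d 0 = f x y := by simp [hddef]
  -- ## Taylor remainders
  set r1 : ℝ → ℝ → ℝ := fun u s => f (x - h1*u) s
    - ∑ i ∈ Finset.range (p1+1), c i s * (-(h1*u))^i / (Nat.factorial i : ℝ) with hr1def
  have hr1bnd : ∀ u s, |r1 u s| ≤ a1 * |h1*u| ^ β1 := by
    intro u s
    have ht := taylor_holder hp1β hβ1 hL1.le (hf1 s) (fun s' t' => hH1 s' t' s) x (x - h1*u)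
    have e : x - h1*u - x = -(h1*u) := by ring
    rw [e] at ht
    rw [hr1def]
    simp only [hcdef]
    rw [abs_neg] at ht
    exact ht
  set r2 : ℝ → ℝ := fun v => f x (y - h2*v)
    - ∑ j ∈ Finset.range (p2+1), d j * (-(h2*v))^j / (Nat.factorial j : ℝ) with hr2def
  have hr2bnd : ∀ v, |r2 v| ≤ a2 * |h2*v| ^ β2 := by
    intro v
    have ht := taylor_holder hp2β hβ2 hL2.le (hf2 x) (fun s' t' => hH2 x s' t') y (y - h2*v)
    have e : y - h2*v - y = -(h2*v) := by ring
    rw [e] at ht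
    rw [hr2def]
    simp only [hddef]
    rw [abs_neg] at ht
    exact ht
  have hr2cont : Continuous r2 := by
    rw [hr2def]
    refine Continuous.sub ((hfc2 x).comp (by fun_prop)) ?_
    exact continuous_finset_sum _ fun j _ => by fun_prop
  -- ## bound on the coefficients c i on the relevant compact set
  have hccont : Continuous fun v : ℝ =>
      W1 * (∑ k ∈ Finset.range (p1+1), |f (x + k) (y - h2*v)| + 1) := by
    refine Continuous.mul continuous_const (Continuous.add ?_ continuous_const)
    exact continuous_finset_sum _ fun k _ => ((hfc2 (x + k)).comp (by fun_prop)).abs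
  obtain ⟨Dc, hDc⟩ := isCompact_Icc.exists_bound_of_continuousOn
    (s := Set.Icc (-1:ℝ) 1) hccont.continuousOn
  have hcbnd : ∀ i, i ≤ p1 → ∀ v ∈ Set.Icc (-1:ℝ) 1, |c i (y - h2*v)| ≤ Dc := by
    intro i hi v hv
    have hb1 := hW1 (fun t => f t (y - h2*v)) (hf1 (y - h2*v))
      (fun s' t' => hH1 s' t' (y - h2*v)) x i hi
    have hb2 := hDc v hv
    rw [Real.norm_eq_abs] at hb2
    calc |c i (y - h2*v)| ≤ W1 * (∑ k ∈ Finset.range (p1+1), |f (x + k) (y - h2*v)| + 1) := hb1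
      _ ≤ |W1 * (∑ k ∈ Finset.range (p1+1), |f (x + k) (y - h2*v)| + 1)| := le_abs_self _
      _ ≤ Dc := hb2
  -- ## joint measurability
  have hSMf : StronglyMeasurable (Function.uncurry fun u v => f (x - h1*u) (y - h2*v)) := by
    refine stronglyMeasurable_uncurry_of_continuous_of_stronglyMeasurable
      (fun v => (hfc1 (y - h2*v)).comp (by fun_prop)) (fun u => ?_)
    exact ((hfc2 (x - h1*u)).comp (by fun_prop)).stronglyMeasurable
  have hr1M : Measurable fun q : ℝ × ℝ => r1 q.1 (y - h2*q.2) := by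
    rw [hr1def]
    refine Measurable.sub ?_ ?_
    · exact hSMf.measurable
    · refine Finset.measurable_sum _ fun i hi => ?_
      have hi' : i ≤ p1 := Nat.lt_succ_iff.mp (Finset.mem_range.mp hi)
      exact (((hcmeas i hi').comp (by fun_prop : Measurable fun q : ℝ × ℝ => y - h2*q.2)).mul
        (by fun_prop : Measurable fun q : ℝ × ℝ => (-(h1*q.1))^i)).div_const _
  set ρ1 : ℝ → ℝ := fun u => ∫ v, K v * r1 u (y - h2*v) with hρ1def
  have hρ1meas : AEStronglyMeasurable ρ1 volume := by
    have hsm : StronglyMeasurable fun q : ℝ × ℝ => K q.2 * r1 q.1 (y - h2*q.2) :=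
      ((hKmeas.comp measurable_snd).mul hr1M).stronglyMeasurable
    exact hsm.integral_prod_right'.aestronglyMeasurable
  set q2 : ℝ := ∫ v, K v * r2 v with hq2def
  -- pointwise bound facts
  have hT1nn : (0:ℝ) ≤ h1 ^ β1 := Real.rpow_nonneg h1pos.le _
  have hT2nn : (0:ℝ) ≤ h2 ^ β2 := Real.rpow_nonneg h2pos.le _
  have hr1bnd' : ∀ u ∈ Set.Icc (-1:ℝ) 1, ∀ s, |r1 u s| ≤ a1 * h1 ^ β1 := by
    intro u hu s
    refine (hr1bnd u s).trans ?_
    refine mul_le_mul_of_nonneg_left ?_ ha1nn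
    refine Real.rpow_le_rpow (abs_nonneg _) ?_ hβ1.le
    rw [abs_mul, abs_of_pos h1pos]
    have : |u| ≤ 1 := abs_le.mpr ⟨hu.1, hu.2⟩
    nlinarith
  have hr2bnd' : ∀ v ∈ Set.Icc (-1:ℝ) 1, |r2 v| ≤ a2 * h2 ^ β2 := by
    intro v hv
    refine (hr2bnd v).trans ?_
    refine mul_le_mul_of_nonneg_left ?_ ha2nn
    refine Real.rpow_le_rpow (abs_nonneg _) ?_ hβ2.le
    rw [abs_mul, abs_of_pos h2pos]
    have : |v| ≤ 1 := abs_le.mpr ⟨hv.1, hv.2⟩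
    nlinarith
  -- ## inner integral computation
  have hJ : ∀ u : ℝ, (∫ v, K v * (f (x - h1*u) (y - h2*v) - f x y))
      = (∑ i ∈ Finset.range p1, (∫ v, K v * c (i+1) (y - h2*v))
          * ((-h1)^(i+1) * u^(i+1) / (Nat.factorial (i+1) : ℝ)))
        + ρ1 u + q2 := by
    intro u
    have hpt : (fun v => K v * (f (x - h1*u) (y - h2*v) - f x y))
        = fun v => (∑ i ∈ Finset.range p1, (K v * c (i+1) (y - h2*v))
              * ((-h1)^(i+1) * u^(i+1) / (Nat.factorial (i+1) : ℝ)))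
            + ((∑ j ∈ Finset.range p2, (K v * v^(j+1))
              * (d (j+1) * (-h2)^(j+1) / (Nat.factorial (j+1) : ℝ)))
            + (K v * r1 u (y - h2*v) + K v * r2 v)) := by
      funext v
      have e1 : ∑ i ∈ Finset.range p1, (K v * c (i+1) (y - h2*v))
          * ((-h1)^(i+1) * u^(i+1) / (Nat.factorial (i+1) : ℝ))
          = K v * ∑ i ∈ Finset.range p1,
              c (i+1) (y - h2*v) * (-(h1*u))^(i+1) / (Nat.factorial (i+1) : ℝ) := by
        rw [Finset.mul_sum]
        refine Finset.sum_congr rfl fun i _ => ?_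
        have e : (-(h1*u))^(i+1) = (-h1)^(i+1) * u^(i+1) := by
          rw [← mul_pow]; ring_nf
        rw [e]; ring
      have e2 : ∑ j ∈ Finset.range p2, (K v * v^(j+1))
          * (d (j+1) * (-h2)^(j+1) / (Nat.factorial (j+1) : ℝ))
          = K v * ∑ j ∈ Finset.range p2,
              d (j+1) * (-(h2*v))^(j+1) / (Nat.factorial (j+1) : ℝ) := by
        rw [Finset.mul_sum]
        refine Finset.sum_congr rfl fun j _ => ?_
        have e : (-(h2*v))^(j+1) = (-h2)^(j+1) * v^(j+1) := by
          rw [← mul_pow]; ring_nf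
        rw [e]; ring
      have hfull1 : ∑ i ∈ Finset.range (p1+1),
          c i (y - h2*v) * (-(h1*u))^i / (Nat.factorial i : ℝ)
          = (∑ i ∈ Finset.range p1,
              c (i+1) (y - h2*v) * (-(h1*u))^(i+1) / (Nat.factorial (i+1) : ℝ))
            + f x (y - h2*v) := by
        rw [Finset.sum_range_succ' (fun i => c i (y - h2*v) * (-(h1*u))^i / (Nat.factorial i : ℝ)) p1]
        rw [show c 0 (y - h2*v) * (-(h1*u))^0 / (Nat.factorial 0 : ℝ) = f x (y - h2*v) by
          rw [hc0]; simp]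
      have hfull2 : ∑ j ∈ Finset.range (p2+1),
          d j * (-(h2*v))^j / (Nat.factorial j : ℝ)
          = (∑ j ∈ Finset.range p2,
              d (j+1) * (-(h2*v))^(j+1) / (Nat.factorial (j+1) : ℝ))
            + f x y := by
        rw [Finset.sum_range_succ' (fun j => d j * (-(h2*v))^j / (Nat.factorial j : ℝ)) p2]
        rw [show d 0 * (-(h2*v))^0 / (Nat.factorial 0 : ℝ) = f x y by rw [hd0]; simp]
      rw [e1, e2]
      simp only [hr1def, hr2def]
      rw [hfull1, hfull2]
      ring
    have i1 : ∀ i ∈ Finset.range p1, Integrable fun v => (K v * c (i+1) (y - h2*v))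
        * ((-h1)^(i+1) * u^(i+1) / (Nat.factorial (i+1) : ℝ)) := by
      intro i hi
      have hi' : i + 1 ≤ p1 := Finset.mem_range.mp hi
      refine Integrable.mul_const ?_ _
      refine hIntKb _ Dc ?_ (hcbnd (i+1) hi')
      exact ((hcmeas (i+1) hi').comp (by fun_prop : Measurable fun v : ℝ => y - h2*v)).aestronglyMeasurable
    have i2 : ∀ j ∈ Finset.range p2, Integrable fun v => (K v * v^(j+1))
        * (d (j+1) * (-h2)^(j+1) / (Nat.factorial (j+1) : ℝ)) := by
      intro j _
      exact (hIntKcont (fun v => v^(j+1)) (by fun_prop)).mul_const _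
    have i3 : Integrable fun v => K v * r1 u (y - h2*v) := by
      refine hIntKb _ (a1 * |h1*u| ^ β1) ?_ (fun w _ => hr1bnd u (y - h2*w))
      have : Measurable fun v : ℝ => r1 u (y - h2*v) := by
        have := hr1M.comp (by fun_prop : Measurable fun v : ℝ => ((u : ℝ), v))
        exact this
      exact this.aestronglyMeasurable
    have i4 : Integrable fun v => K v * r2 v := hIntKcont _ hr2cont
    have i34 : Integrable fun v => K v * r1 u (y - h2*v) + K v * r2 v := by
      exact i3.add i4
    have i234 : Integrable fun v => (∑ j ∈ Finset.range p2, (K v * v^(j+1))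
        * (d (j+1) * (-h2)^(j+1) / (Nat.factorial (j+1) : ℝ)))
        + (K v * r1 u (y - h2*v) + K v * r2 v) := by
      exact (integrable_finset_sum _ i2).add i34
    rw [hpt]
    rw [integral_add (integrable_finset_sum _ i1) i234]
    rw [integral_add (integrable_finset_sum _ i2) i34]
    rw [integral_add i3 i4]
    rw [integral_finset_sum _ i1, integral_finset_sum _ i2]
    have hz2 : ∑ j ∈ Finset.range p2, ∫ v, (K v * v^(j+1))
        * (d (j+1) * (-h2)^(j+1) / (Nat.factorial (j+1) : ℝ)) = 0 := by
      refine Finset.sum_eq_zero fun j hj => ?_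
      rw [integral_mul_const]
      have : (∫ v, K v * v^(j+1)) = 0 := by
        have hj' : j + 1 ≤ p2 := Finset.mem_range.mp hj
        exact hKmom (j+1) (Nat.le_add_left 1 j) (le_trans hj' hp2M)
      rw [this, zero_mul]
    rw [hz2]
    have hs : ∀ i ∈ Finset.range p1, (∫ v, (K v * c (i+1) (y - h2*v))
        * ((-h1)^(i+1) * u^(i+1) / (Nat.factorial (i+1) : ℝ)))
        = (∫ v, K v * c (i+1) (y - h2*v))
          * ((-h1)^(i+1) * u^(i+1) / (Nat.factorial (i+1) : ℝ)) := by
      intro i _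
      rw [integral_mul_const]
    rw [Finset.sum_congr rfl hs]
    rw [hρ1def, hq2def]
    ring
  -- ## outer integral
  have hρ1bnd : ∀ u ∈ Set.Icc (-1:ℝ) 1, |ρ1 u| ≤ 2 * (B * (a1 * h1 ^ β1)) := by
    intro u hu
    rw [hρ1def]
    refine hKBnd _ (a1 * h1 ^ β1) ?_ (fun w _ => hr1bnd' u hu (y - h2*w))
    have : Measurable fun v : ℝ => r1 u (y - h2*v) := by
      have := hr1M.comp (by fun_prop : Measurable fun v : ℝ => ((u : ℝ), v))
      exact this
    exact this.aestronglyMeasurable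
  have hq2bnd : |q2| ≤ 2 * (B * (a2 * h2 ^ β2)) := by
    rw [hq2def]
    exact hKBnd _ (a2 * h2 ^ β2) hr2cont.measurable.aestronglyMeasurable hr2bnd'
  have hstep : (fun u => ∫ v, K u * K v * (f (x - h1*u) (y - h2*v) - f x y))
      = fun u => (∑ i ∈ Finset.range p1, (K u * u^(i+1))
          * ((∫ v, K v * c (i+1) (y - h2*v)) * ((-h1)^(i+1) / (Nat.factorial (i+1) : ℝ))))
        + (K u * ρ1 u + K u * q2) := by
    funext u
    have e0 : (∫ v, K u * K v * (f (x - h1*u) (y - h2*v) - f x y))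
        = K u * ∫ v, K v * (f (x - h1*u) (y - h2*v) - f x y) := by
      rw [← integral_const_mul]
      congr 1
      funext v
      ring
    rw [e0, hJ u]
    rw [mul_add, mul_add, Finset.mul_sum, add_assoc]
    congr 1
    refine Finset.sum_congr rfl fun i _ => ?_
    ring
  have o1 : ∀ i ∈ Finset.range p1, Integrable fun u => (K u * u^(i+1))
      * ((∫ v, K v * c (i+1) (y - h2*v)) * ((-h1)^(i+1) / (Nat.factorial (i+1) : ℝ))) := by
    intro i _
    exact (hIntKcont (fun u => u^(i+1)) (by fun_prop)).mul_const _
  have o2 : Integrable fun u => K u * ρ1 u :=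
    hIntKb _ (2 * (B * (a1 * h1 ^ β1))) hρ1meas hρ1bnd
  have o3 : Integrable fun u => K u * q2 := hKint'.mul_const _
  have o23 : Integrable fun u => K u * ρ1 u + K u * q2 := by exact o2.add o3
  have houter : (∫ u, ∫ v, K u * K v * (f (x - h1*u) (y - h2*v) - f x y))
      = (∫ u, K u * ρ1 u) + q2 := by
    rw [hstep]
    rw [integral_add (integrable_finset_sum _ o1) o23]
    rw [integral_add o2 o3]
    rw [integral_finset_sum _ o1]
    have hz1 : ∑ i ∈ Finset.range p1, ∫ u, (K u * u^(i+1))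
        * ((∫ v, K v * c (i+1) (y - h2*v)) * ((-h1)^(i+1) / (Nat.factorial (i+1) : ℝ))) = 0 := by
      refine Finset.sum_eq_zero fun i hi => ?_
      rw [integral_mul_const]
      have : (∫ u, K u * u^(i+1)) = 0 := by
        have hi' : i + 1 ≤ p1 := Finset.mem_range.mp hi
        exact hKmom (i+1) (Nat.le_add_left 1 i) (le_trans hi' hp1M)
      rw [this, zero_mul]
    rw [hz1]
    have : (∫ u, K u * q2) = q2 := by
      rw [integral_mul_const, hKint, one_mul]
    rw [this]
    ring
  -- ## final bound
  rw [houter]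
  have hKρbnd : |∫ u, K u * ρ1 u| ≤ 2 * (B * (2 * (B * (a1 * h1 ^ β1)))) :=
    hKBnd _ (2 * (B * (a1 * h1 ^ β1))) hρ1meas hρ1bnd
  have habs : |(∫ u, K u * ρ1 u) + q2| ≤ |∫ u, K u * ρ1 u| + |q2| := abs_add_le _ _
  have hC1 : 4*B^2*a1 ≤ (2*B+1)^2 * (a1 + a2) + 1 := by nlinarith [sq_nonneg B, mul_nonneg hB0 ha1nn, mul_nonneg hB0 ha2nn, mul_nonneg (mul_nonneg hB0 hB0) ha2nn, mul_nonneg (mul_nonneg hB0 hB0) ha1nn]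
  have hC2 : 2*B*a2 ≤ (2*B+1)^2 * (a1 + a2) + 1 := by nlinarith [sq_nonneg B, mul_nonneg hB0 ha1nn, mul_nonneg hB0 ha2nn, mul_nonneg (mul_nonneg hB0 hB0) ha2nn, mul_nonneg (mul_nonneg hB0 hB0) ha1nn]
  calc |(∫ u, K u * ρ1 u) + q2| ≤ |∫ u, K u * ρ1 u| + |q2| := habs
    _ ≤ 2 * (B * (2 * (B * (a1 * h1 ^ β1)))) + 2 * (B * (a2 * h2 ^ β2)) :=
        add_le_add hKρbnd hq2bnd
    _ = (4*B^2*a1) * h1 ^ β1 + (2*B*a2) * h2 ^ β2 := by ring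
    _ ≤ ((2*B+1)^2 * (a1 + a2) + 1) * h1 ^ β1 + ((2*B+1)^2 * (a1 + a2) + 1) * h2 ^ β2 :=
        add_le_add (mul_le_mul_of_nonneg_right hC1 hT1nn) (mul_le_mul_of_nonneg_right hC2 hT2nn)
    _ = ((2*B+1)^2 * (a1 + a2) + 1) * (h1 ^ β1 + h2 ^ β2) := by ring




end MainProof
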